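/- Let D ⊆ H ⊆ R be integral domains with R a proper overring of D (D ⊊ R and R contained in the quotient field of D) and H integrally closed. Suppose there exist prime ideals P_1,…,P_t of H with t > 0 such that H = H_{P_1} ∩ ⋯ ∩ H_{P_t} ∩ R, each localization H_{P_i} is a discrete valuation ring, and no H_{P_i} can be omitted from this intersection. Let n be a positive integer. If t ≤ n, then H is an essentially n-valuated subring of R. If n < t, then: (1) H is an essentially n-valuated subring of R if and only if P_{i_1} + P_{i_2} + ⋯ + P_{i_{n+1}} = H whenever i_1, i_2, …, i_{n+1} are distinct members of {1,…,t}; and (2) H is an essentially one-valuated subring of R if and only if the prime ideals P_1,…,P_t are pairwise comaximal. -/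

import Mathlib

namespace ArticleOT

variable {K : Type*} [Field K]

/-- The localization of `R` at the multiplicative set `A \ P`, as a subset of the field `K`. -/
def locSet (A : Subring K) (P : Ideal A) (R : Subring K) : Set K :=
  {x : K | ∃ r ∈ R, ∃ s : A, s ∉ P ∧ x * (s : K) = r}

/-- The localization `A_P` of a subring `A` of `K` at a prime ideal `P`, as a subring of `K`. -/
def locSubring (A : Subring K) (P : Ideal A) (hP : P.IsPrime) : Subring K where
  carrier := locSet A P A
  zero_mem' := ⟨0, zero_mem A, 1, fun h => hP.ne_top ((Ideal.eq_top_iff_one P).2 h), by simp⟩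
  one_mem' := ⟨1, one_mem A, 1, fun h => hP.ne_top ((Ideal.eq_top_iff_one P).2 h), by simp⟩
  add_mem' := by
    rintro x y ⟨r₁, hr₁, s₁, hs₁, e₁⟩ ⟨r₂, hr₂, s₂, hs₂, e₂⟩
    refine ⟨r₁ * (s₂ : K) + r₂ * (s₁ : K),
      add_mem (mul_mem hr₁ s₂.2) (mul_mem hr₂ s₁.2), s₁ * s₂,
      fun h => ((hP.mem_or_mem h).elim hs₁ hs₂), ?_⟩
    push_cast
    calc (x + y) * ((s₁ : K) * (s₂ : K)) = (x * s₁) * s₂ + (y * s₂) * s₁ := by ring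
    _ = r₁ * s₂ + r₂ * s₁ := by rw [e₁, e₂]
  mul_mem' := by
    rintro x y ⟨r₁, hr₁, s₁, hs₁, e₁⟩ ⟨r₂, hr₂, s₂, hs₂, e₂⟩
    refine ⟨r₁ * r₂, mul_mem hr₁ hr₂, s₁ * s₂,
      fun h => ((hP.mem_or_mem h).elim hs₁ hs₂), ?_⟩
    push_cast
    calc (x * y) * ((s₁ : K) * (s₂ : K)) = (x * s₁) * (y * s₂) := by ring
    _ = r₁ * r₂ := by rw [e₁, e₂]
  neg_mem' := by
    rintro x ⟨r, hr, s, hs, e⟩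
    exact ⟨-r, neg_mem hr, s, hs, by rw [neg_mul, e]⟩

lemma mem_locSubring {A : Subring K} {P : Ideal A} {hP : P.IsPrime} {x : K} :
    x ∈ locSubring A P hP ↔ x ∈ locSet A P A := Iff.rfl

/-- The integral closure of a subring `H` of `K` in `K`, as a subring of `K`.  When `K` is the
quotient field of `H` this is the integral closure `H̄` of `H`. -/
noncomputable def intClosure (H : Subring K) : Subring K := (integralClosure H K).toSubring

lemma mem_intClosure_of_mem {H : Subring K} {x : K} (hx : x ∈ H) : x ∈ intClosure H := by
  have : IsIntegral (↥H) x := by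
    refine ⟨Polynomial.X - Polynomial.C ⟨x, hx⟩, Polynomial.monic_X_sub_C _, ?_⟩
    simp only [Polynomial.eval₂_sub, Polynomial.eval₂_X, Polynomial.eval₂_C]
    exact sub_eq_zero_of_eq rfl
  exact this

/-- `H` is an essentially `n`-valuated subring of `R` (both subrings of the field `K`, which is
the common quotient field): for each prime ideal `P` of the integral closure `H̄` of `H` there
are `n` (not necessarily distinct) valuation overrings `V i` of `H` with
`H̄_P = V 1 ∩ ⋯ ∩ V n ∩ R_P`. -/
noncomputable def EssNVal (H R : Subring K) (n : ℕ) : Prop :=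
  ∀ P : Ideal (intClosure H), P.IsPrime →
    ∃ V : Fin n → Subring K,
      (∀ i, H ≤ V i ∧ ValuationRing (V i)) ∧
      locSet (intClosure H) P (intClosure H) =
        (⋂ i, (V i : Set K)) ∩ locSet (intClosure H) P R

/-- A prime ideal of height one: a nonzero prime all of whose strictly smaller primes are zero
(in a domain this says precisely that the height is one). -/
def HeightOne {A : Type*} [CommRing A] (Q : Ideal A) : Prop :=
  Q.IsPrime ∧ Q ≠ ⊥ ∧ ∀ Q' : Ideal A, Q'.IsPrime → Q' < Q → Q' = ⊥

/-- `V` is a hidden prime divisor of the local domain `D` (mapped into the field `K`, its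
quotient field, by `φ`): `V` is a DVR overring of `D` that dominates `D` (every nonunit of `D`
maps to a nonunit of `V`, i.e. `m_D ⊆ m_V`) and whose residue field `V/m_V` (here `m_V` is the
Jacobson radical, which is the maximal ideal since `V` is local) has transcendence degree
`d - 1` over (the isomorphic image of) the residue field of `D`, where `d = dim D`. -/
noncomputable def IsHiddenPrimeDivisor {D : Type*} [CommRing D] (φ : D →+* K) (V : Subring K)
    (hV : ∀ r, φ r ∈ V) : Prop :=
  IsDiscreteValuationRing V ∧
  (∀ r : D, ¬ IsUnit r → ¬ IsUnit (φ.codRestrict V hV r)) ∧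
  (∃ d : ℕ, ringKrullDim D = (d : ℕ) ∧
    ∃ b : Fin (d - 1) → (↥V ⧸ (⊥ : Ideal V).jacobson),
      IsTranscendenceBasis
        (((Ideal.Quotient.mk ((⊥ : Ideal V).jacobson)).comp (φ.codRestrict V hV)).range) b)

lemma phi_mem_locSubring {D : Type*} [CommRing D] (φ : D →+* K) {H : Subring K}
    (hDH : ∀ r, φ r ∈ H) {P : Ideal H} (hP : P.IsPrime) (r : D) :
    φ r ∈ locSubring H P hP :=
  ⟨φ r, hDH r, 1, fun h => hP.ne_top ((Ideal.eq_top_iff_one P).2 h), by simp⟩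

/-- `Q` is an exceptional prime ideal of the extension `H/D`: `Q` is a height one prime of `H`
such that the localization `H_Q` is a hidden prime divisor of `D`. -/
noncomputable def IsExceptionalPrime {D : Type*} [CommRing D] (φ : D →+* K) (H : Subring K)
    (hDH : ∀ r, φ r ∈ H) (Q : Ideal H) : Prop :=
  ∃ hQ : Q.IsPrime, HeightOne Q ∧
    IsHiddenPrimeDivisor φ (locSubring H Q hQ) (phi_mem_locSubring φ hDH hQ)

/-- The extension `H/D` is essentially `n`-fibered: for each prime ideal `P` of `H`, the
extension `H_P/D` has at most `n` exceptional prime ideals. -/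
noncomputable def EssNFibered {D : Type*} [CommRing D] (φ : D →+* K) (H : Subring K)
    (hDH : ∀ r, φ r ∈ H) (n : ℕ) : Prop :=
  ∀ (P : Ideal H) (hP : P.IsPrime),
    {Q : Ideal (locSubring H P hP) |
        IsExceptionalPrime φ (locSubring H P hP) (phi_mem_locSubring φ hDH hP) Q}.Finite ∧
    {Q : Ideal (locSubring H P hP) |
        IsExceptionalPrime φ (locSubring H P hP) (phi_mem_locSubring φ hDH hP) Q}.ncard ≤ n

/-- The overring `D[1/f]` of (the image under `φ` of) `D`, as a subring of the field `K`. -/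
noncomputable def awayS {D : Type*} [CommRing D] (φ : D →+* K) (f : D) : Subring K :=
  Subring.closure (Set.range φ ∪ {(φ f)⁻¹})

lemma phi_mem_awayS {D : Type*} [CommRing D] (φ : D →+* K) (f : D) (r : D) :
    φ r ∈ awayS φ f :=
  Subring.subset_closure (Or.inl ⟨r, rfl⟩)

/-- The localization of `R` at (the image of) the multiplicative set `S ⊆ D₀`, as a subring of
the field `K`; `hR` says that `φ` maps `D₀` into `R`. -/
def subLoc {D₀ : Type*} [CommRing D₀] (φ : D₀ →+* K) (S : Submonoid D₀) (R : Subring K)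
    (hR : ∀ d, φ d ∈ R) : Subring K where
  carrier := {x : K | ∃ r ∈ R, ∃ s ∈ S, x * φ s = r}
  zero_mem' := ⟨0, zero_mem R, 1, S.one_mem, by simp⟩
  one_mem' := ⟨φ 1, hR 1, 1, S.one_mem, by simp⟩
  add_mem' := by
    rintro x y ⟨r₁, hr₁, s₁, hs₁, e₁⟩ ⟨r₂, hr₂, s₂, hs₂, e₂⟩
    refine ⟨r₁ * φ s₂ + r₂ * φ s₁, add_mem (mul_mem hr₁ (hR s₂)) (mul_mem hr₂ (hR s₁)),
      s₁ * s₂, S.mul_mem hs₁ hs₂, ?_⟩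
    rw [map_mul]
    calc (x + y) * (φ s₁ * φ s₂) = (x * φ s₁) * φ s₂ + (y * φ s₂) * φ s₁ := by ring
    _ = r₁ * φ s₂ + r₂ * φ s₁ := by rw [e₁, e₂]
  mul_mem' := by
    rintro x y ⟨r₁, hr₁, s₁, hs₁, e₁⟩ ⟨r₂, hr₂, s₂, hs₂, e₂⟩
    refine ⟨r₁ * r₂, mul_mem hr₁ hr₂, s₁ * s₂, S.mul_mem hs₁ hs₂, ?_⟩
    rw [map_mul]
    calc (x * y) * (φ s₁ * φ s₂) = (x * φ s₁) * (y * φ s₂) := by ring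
    _ = r₁ * r₂ := by rw [e₁, e₂]
  neg_mem' := by
    rintro x ⟨r, hr, s, hs, e⟩
    exact ⟨-r, neg_mem hr, s, hs, by rw [neg_mul, e]⟩



section Aux

variable {H : Subring K}

/-- Localization of an arbitrary subset of `K` at `H \ P`. -/
def locS (H : Subring K) (P : Ideal H) (A : Set K) : Set K :=
  {x : K | ∃ r ∈ A, ∃ s : H, s ∉ P ∧ x * (s : K) = r}

lemma locSet_eq_locS (P : Ideal H) (R : Subring K) : locSet H P R = locS H P (R : Set K) := rfl

lemma one_not_mem_of_prime {P : Ideal H} (hP : P.IsPrime) : (1 : H) ∉ P := fun h =>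
  hP.ne_top ((Ideal.eq_top_iff_one P).2 h)

lemma subset_locS {P : Ideal H} (hP : P.IsPrime) (A : Set K) : A ⊆ locS H P A :=
  fun x hx => ⟨x, hx, 1, one_not_mem_of_prime hP, by simp⟩

lemma prod_not_mem {P : Ideal H} (hP : P.IsPrime) {ι : Type*} (fs : Finset ι) (f : ι → H)
    (h : ∀ i ∈ fs, f i ∉ P) : ∏ i ∈ fs, f i ∉ P :=
  Finset.prod_induction f (· ∉ P) (fun a b ha hb hab => (hP.mem_or_mem hab).elim ha hb)
    (one_not_mem_of_prime hP) h

lemma le_locSubring {P : Ideal H} (hP : P.IsPrime) : H ≤ locSubring H P hP :=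
  fun x hx => ⟨x, hx, 1, one_not_mem_of_prime hP, by simp⟩

lemma frac_of_le {D V : Subring K} (hquot : ∀ x : K, ∃ a ∈ D, ∃ b ∈ D, b ≠ 0 ∧ x * b = a)
    (h : D ≤ V) : ∀ x : K, ∃ a ∈ V, ∃ b ∈ V, b ≠ 0 ∧ x * b = a := fun x => by
  obtain ⟨a, ha, b, hb, h0, e⟩ := hquot x
  exact ⟨a, h ha, b, h hb, h0, e⟩

lemma locS_locSet {P Q : Ideal H} (hP : P.IsPrime) (hQ : Q.IsPrime) (hPQ : P ≤ Q)
    (A : Subring K) : locS H P (locSet H Q A) = locSet H P A := by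
  apply Set.Subset.antisymm
  · rintro x ⟨r, ⟨r', hr', s', hs', e'⟩, s, hs, e⟩
    refine ⟨r', hr', s * s', fun hm => ?_, ?_⟩
    · rcases hP.mem_or_mem hm with hm | hm
      · exact hs hm
      · exact hs' (hPQ hm)
    · push_cast
      rw [← mul_assoc, e, e']
  · rintro x ⟨r, hr, s, hs, e⟩
    exact ⟨r, ⟨r, hr, 1, one_not_mem_of_prime hQ, by simp⟩, s, hs, e⟩

lemma locS_iInter_inter {P : Ideal H} (hP : P.IsPrime) {m : ℕ} (A : Fin m → Set K) (B : Set K)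
    (hA : ∀ j, ∀ a ∈ A j, ∀ s : H, a * (s : K) ∈ A j)
    (hB : ∀ a ∈ B, ∀ s : H, a * (s : K) ∈ B) :
    locS H P ((⋂ j, A j) ∩ B) = (⋂ j, locS H P (A j)) ∩ locS H P B := by
  apply Set.Subset.antisymm
  · rintro x ⟨r, ⟨hr1, hr2⟩, s, hs, e⟩
    exact ⟨Set.mem_iInter.2 fun j => ⟨r, Set.mem_iInter.1 hr1 j, s, hs, e⟩, ⟨r, hr2, s, hs, e⟩⟩
  · rintro x ⟨hx1, hxB⟩
    obtain ⟨rB, hrB, sB, hsB, eB⟩ := hxB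
    choose r hr s hs e using fun j => Set.mem_iInter.1 hx1 j
    classical
    set S : H := sB * ∏ j, s j with hS
    have hSP : S ∉ P := by
      intro hm
      rcases hP.mem_or_mem hm with hm | hm
      · exact hsB hm
      · exact prod_not_mem hP _ _ (fun j _ => hs j) hm
    refine ⟨x * (S : K), ⟨Set.mem_iInter.2 fun j => ?_, ?_⟩, S, hSP, rfl⟩
    · have hsplit : S = s j * (sB * ∏ k ∈ Finset.univ.erase j, s k) := by
        rw [hS, ← Finset.mul_prod_erase Finset.univ s (Finset.mem_univ j)]; ring
      have : x * (S : K) = (x * (s j : K)) * ((sB * ∏ k ∈ Finset.univ.erase j, s k : H) : K) := by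
        rw [hsplit]; push_cast; ring
      rw [this, e j]
      exact hA j _ (hr j) _
    · have : x * (S : K) = (x * (sB : K)) * ((∏ j, s j : H) : K) := by
        rw [hS]; push_cast; ring
      rw [this, eB]
      exact hB _ hrB _

lemma P_injective {t : ℕ} {P : Fin t → Ideal H}
    (hirr : ∀ j, ¬ ((⋂ i ∈ ({j}ᶜ : Set (Fin t)), locSet H (P i) H) ∩ (R : Set K)
        ⊆ locSet H (P j) H)) : Function.Injective P := by
  intro i j hij
  by_contra hne
  apply hirr i
  intro x hx
  have hj : j ∈ ({i}ᶜ : Set (Fin t)) := by simpa using fun h => hne h.symm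
  have := Set.mem_iInter₂.1 hx.1 j hj
  rwa [← hij] at this

lemma dvd_pow_of_nonunit {V : Type*} [CommRing V] [IsDomain V] (hd : IsDiscreteValuationRing V)
    {b u : V} (hb : b ≠ 0) (hu : ¬IsUnit u) : ∃ m : ℕ, b ∣ u ^ m := by
  haveI := hd
  obtain ⟨ϖ, hϖ⟩ := IsDiscreteValuationRing.exists_irreducible V
  obtain ⟨k, hk⟩ := IsDiscreteValuationRing.associated_pow_irreducible hb hϖ
  have hdvd : ϖ ∣ u := by
    have hm : u ∈ IsLocalRing.maximalIdeal V := hu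
    rw [hϖ.maximalIdeal_eq, Ideal.mem_span_singleton] at hm
    exact hm
  exact ⟨k, hk.dvd.trans (pow_dvd_pow_of_dvd hdvd k)⟩

lemma not_isUnit_subtype {V : Subring K} {u : K} (hu : u ∈ V) (hui : u⁻¹ ∉ V) :
    ¬ IsUnit (⟨u, hu⟩ : V) := by
  intro h
  obtain ⟨v, hv⟩ := h.exists_right_inv
  apply hui
  have hvK : u * (v : K) = 1 := by simpa using congrArg (fun z : V => (z : K)) hv
  rw [inv_eq_of_mul_eq_one_right hvK]
  exact v.2

lemma exists_pow_mul_mem {V : Subring K} (hd : IsDiscreteValuationRing V)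
    (hfrac : ∀ x : K, ∃ a ∈ V, ∃ b ∈ V, b ≠ 0 ∧ x * b = a)
    {u : K} (hu : u ∈ V) (hui : u⁻¹ ∉ V) (x : K) :
    ∃ m : ℕ, x * u ^ m ∈ V := by
  obtain ⟨a, ha, b, hb, hb0, e⟩ := hfrac x
  have hbV : (⟨b, hb⟩ : V) ≠ 0 := fun h => hb0 (by simpa [Subtype.ext_iff] using h)
  obtain ⟨m, c, hc⟩ := dvd_pow_of_nonunit hd hbV (not_isUnit_subtype hu hui)
  refine ⟨m, ?_⟩
  have hcK : u ^ m = b * (c : K) := by simpa using congrArg (fun z : V => (z : K)) hc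
  have : x * u ^ m = a * (c : K) := by rw [hcK, ← mul_assoc, e]
  rw [this]
  exact mul_mem ha c.2

lemma mem_or_inv_mem {V : Subring K} (hv : ValuationRing V)
    (hfrac : ∀ x : K, ∃ a ∈ V, ∃ b ∈ V, b ≠ 0 ∧ x * b = a) (x : K) :
    x ∈ V ∨ x⁻¹ ∈ V := by
  obtain ⟨a, ha, b, hb, hb0, e⟩ := hfrac x
  haveI := hv
  obtain ⟨c, hc | hc⟩ := ValuationRing.cond (⟨a, ha⟩ : V) ⟨b, hb⟩
  · by_cases ha0 : a = 0
    · left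
      have hx0 : x = 0 := by
        rcases mul_eq_zero.1 (e.trans (by rw [ha0])) with h | h
        · exact h
        · exact absurd h hb0
      rw [hx0]; exact zero_mem V
    · right
      have hcK : a * (c : K) = b := by simpa using congrArg (fun z : V => (z : K)) hc
      have hx : x * (c : K) = 1 := by
        apply mul_left_cancel₀ ha0
        calc a * (x * (c : K)) = x * (a * (c : K)) := by ring
        _ = x * b := by rw [hcK]
        _ = a := e
        _ = a * 1 := by rw [mul_one]
      rw [inv_eq_of_mul_eq_one_right hx]
      exact c.2
  · left
    have hcK : b * (c : K) = a := by simpa using congrArg (fun z : V => (z : K)) hc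
    have hx : x = (c : K) := by
      apply mul_left_cancel₀ hb0
      rw [mul_comm b x, e, ← hcK]
    rw [hx]; exact c.2

lemma pow_mem_of_mul_closed {W : Set K} (hmul : ∀ x ∈ W, ∀ y ∈ W, x * y ∈ W)
    (h1 : (1 : K) ∈ W) {x : K} (hx : x ∈ W) : ∀ m : ℕ, x ^ m ∈ W := by
  intro m
  induction m with
  | zero => simpa using h1
  | succ k ih => rw [pow_succ]; exact hmul _ ih _ hx

lemma subring_between_dvr (V : Subring K) (hd : IsDiscreteValuationRing V)
    (hfrac : ∀ x : K, ∃ a ∈ V, ∃ b ∈ V, b ≠ 0 ∧ x * b = a) (W : Set K)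
    (hmul : ∀ x ∈ W, ∀ y ∈ W, x * y ∈ W) (hVW : (V : Set K) ⊆ W) :
    W = (V : Set K) ∨ W = Set.univ := by
  by_cases hw : W ⊆ V
  · exact Or.inl (hw.antisymm hVW)
  right
  obtain ⟨x, hxW, hxV⟩ := Set.not_subset.1 hw
  haveI := hd
  have hval : ValuationRing V := inferInstance
  have hxi : x⁻¹ ∈ V := (mem_or_inv_mem hval hfrac x).resolve_left hxV
  have hx0 : x ≠ 0 := fun h => hxV (h ▸ zero_mem V)
  have hxiu : ¬ IsUnit (⟨x⁻¹, hxi⟩ : V) := not_isUnit_subtype hxi (by rwa [inv_inv])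
  ext y
  simp only [Set.mem_univ, iff_true]
  by_cases hyV : y ∈ V
  · exact hVW hyV
  have hyi : y⁻¹ ∈ V := (mem_or_inv_mem hval hfrac y).resolve_left hyV
  have hy0 : y ≠ 0 := fun h => hyV (h ▸ zero_mem V)
  have hyi0 : (⟨y⁻¹, hyi⟩ : V) ≠ 0 := fun h => (inv_ne_zero hy0) (by simpa [Subtype.ext_iff] using h)
  obtain ⟨m, c, hc⟩ := dvd_pow_of_nonunit hd hyi0 hxiu
  have hcK : (x⁻¹ : K) ^ m = y⁻¹ * (c : K) := by simpa using congrArg (fun z : V => (z : K)) hc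
  have hxm : x ^ m ≠ 0 := pow_ne_zero _ hx0
  have hkey : y = (c : K) * x ^ m := by
    have h2 : (x ^ m)⁻¹ = y⁻¹ * c := by rw [← inv_pow]; exact hcK
    calc y = y * ((x ^ m)⁻¹ * x ^ m) := by rw [inv_mul_cancel₀ hxm, mul_one]
    _ = (y * (x ^ m)⁻¹) * x ^ m := by ring
    _ = (y * (y⁻¹ * (c : K))) * x ^ m := by rw [h2]
    _ = (y * y⁻¹) * ((c : K) * x ^ m) := by ring
    _ = (c : K) * x ^ m := by rw [mul_inv_cancel₀ hy0, one_mul]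
  rw [hkey]
  exact hmul _ (hVW c.2) _ (pow_mem_of_mul_closed hmul (hVW (one_mem V)) hxW m)

lemma comparable_of_valuation (V A B : Subring K) (hv : ValuationRing V)
    (hfrac : ∀ x : K, ∃ a ∈ V, ∃ b ∈ V, b ≠ 0 ∧ x * b = a)
    (hVA : V ≤ A) (hVB : V ≤ B) : (A : Set K) ⊆ B ∨ (B : Set K) ⊆ A := by
  by_cases h : (A : Set K) ⊆ B
  · exact Or.inl h
  right
  obtain ⟨a, haA, haB⟩ := Set.not_subset.1 h
  intro b hbB
  have haV : a ∉ V := fun hh => haB (hVB hh)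
  have hai : a⁻¹ ∈ V := (mem_or_inv_mem hv hfrac a).resolve_left haV
  have ha0 : a ≠ 0 := fun h0 => haV (h0 ▸ zero_mem V)
  by_cases hbV : b ∈ V
  · exact hVA hbV
  have hbi : b⁻¹ ∈ V := (mem_or_inv_mem hv hfrac b).resolve_left hbV
  have hb0 : b ≠ 0 := fun h0 => hbV (h0 ▸ zero_mem V)
  haveI := hv
  obtain ⟨c, hc | hc⟩ := ValuationRing.cond (⟨a⁻¹, hai⟩ : V) ⟨b⁻¹, hbi⟩
  · exfalso
    apply haB
    have hcK : (a⁻¹ : K) * c = b⁻¹ := by simpa using congrArg (fun z : V => (z : K)) hc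
    have hkey : a = (c : K) * b := by
      calc a = b⁻¹ * (a * b) := by
              rw [mul_comm a b, ← mul_assoc, inv_mul_cancel₀ hb0, one_mul]
      _ = (a⁻¹ * (c : K)) * (a * b) := by rw [hcK]
      _ = (a⁻¹ * a) * ((c : K) * b) := by ring
      _ = (c : K) * b := by rw [inv_mul_cancel₀ ha0, one_mul]
    rw [hkey]
    exact mul_mem (hVB c.2) hbB
  · have hcK : (b⁻¹ : K) * c = a⁻¹ := by simpa using congrArg (fun z : V => (z : K)) hc
    have hkey : b = (c : K) * a := by
      calc b = a⁻¹ * (b * a) := by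
              rw [mul_comm b a, ← mul_assoc, inv_mul_cancel₀ ha0, one_mul]
      _ = (b⁻¹ * (c : K)) * (b * a) := by rw [hcK]
      _ = (b⁻¹ * b) * ((c : K) * a) := by ring
      _ = (c : K) * a := by rw [inv_mul_cancel₀ hb0, one_mul]
    rw [hkey]
    exact mul_mem (hVA c.2) haA

lemma dvr_ne_univ (V : Subring K) (hd : IsDiscreteValuationRing V) : (V : Set K) ≠ Set.univ := by
  haveI := hd
  obtain ⟨ϖ, hϖ⟩ := IsDiscreteValuationRing.exists_irreducible V
  intro h
  apply hϖ.not_isUnit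
  have hϖ0 : (ϖ : K) ≠ 0 := fun h0 => hϖ.ne_zero (Subtype.ext h0)
  have hinv : ((ϖ : K)⁻¹ : K) ∈ V := by
    show ((ϖ : K)⁻¹ : K) ∈ (V : Set K)
    rw [h]; trivial
  refine IsUnit.of_mul_eq_one (a := ϖ) ⟨(ϖ : K)⁻¹, hinv⟩ ?_
  exact Subtype.ext (by simpa using mul_inv_cancel₀ hϖ0)

lemma prime_le_of_locSet_subset {P Q : Ideal H}
    (h : locSet H Q H ⊆ locSet H P H) : P ≤ Q := by
  intro u huP
  by_contra huQ
  have hu0 : (u : K) ≠ 0 := fun h0 => huQ (by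
    have : u = 0 := Subtype.ext h0
    rw [this]; exact Q.zero_mem)
  have hmem : (u : K)⁻¹ ∈ locSet H Q H := ⟨1, one_mem H, u, huQ, inv_mul_cancel₀ hu0⟩
  obtain ⟨r, hr, s, hsP, e⟩ := h hmem
  apply hsP
  have hsK : (s : K) = (u : K) * r := by
    calc (s : K) = (u : K) * ((u : K)⁻¹ * s) := by
          rw [← mul_assoc, mul_inv_cancel₀ hu0, one_mul]
    _ = (u : K) * r := by rw [e]
  have : s = u * (⟨r, hr⟩ : H) := Subtype.ext hsK
  rw [this]
  exact Ideal.mul_mem_right _ _ huP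

lemma prime_eq_of_locSet_eq {P Q : Ideal H}
    (h : locSet H P H = locSet H Q H) : P = Q :=
  le_antisymm (prime_le_of_locSet_subset h.ge) (prime_le_of_locSet_subset h.le)

end Aux


section Main

variable {D H R : Subring K}

lemma rep_loc (hquot : ∀ x : K, ∃ a ∈ D, ∃ b ∈ D, b ≠ 0 ∧ x * b = a)
    (hDH : D ≤ H) (hHR : H ≤ R)
    {t : ℕ} (P : Fin t → Ideal H) (hP : ∀ i, (P i).IsPrime)
    (hrep : (H : Set K) = (⋂ i, locSet H (P i) H) ∩ (R : Set K))
    (hdvr : ∀ i, IsDiscreteValuationRing (locSubring H (P i) (hP i)))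
    (Q : Ideal H) (hQ : Q.IsPrime) :
    locSet H Q H =
      (⋂ i : {i : Fin t // P i ≤ Q}, locSet H (P i.1) H) ∩ locSet H Q R := by
  apply Set.Subset.antisymm
  · rintro x ⟨r, hr, s, hs, e⟩
    exact ⟨Set.mem_iInter.2 fun i => ⟨r, hr, s, fun hsP => hs (i.2 hsP), e⟩,
      ⟨r, hHR hr, s, hs, e⟩⟩
  · rintro x ⟨hx1, hxR⟩
    obtain ⟨r0, hr0, s0, hs0, e0⟩ := hxR
    classical
    have hw : ∀ i : Fin t, ∃ w : H, w ∉ Q ∧ x * (w : K) ∈ locSubring H (P i) (hP i) := by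
      intro i
      by_cases hle : P i ≤ Q
      · refine ⟨1, one_not_mem_of_prime hQ, ?_⟩
        have := Set.mem_iInter.1 hx1 ⟨i, hle⟩
        simpa [mem_locSubring] using this
      · obtain ⟨u, hu1, hu2⟩ := SetLike.not_le_iff_exists.1 hle
        have hu0 : (u : K) ≠ 0 := fun h0 => hu2 (by
          have hz : u = 0 := by exact_mod_cast h0
          rw [hz]; exact Q.zero_mem)
        have huV : (u : K) ∈ locSubring H (P i) (hP i) := le_locSubring (hP i) u.2
        have huinv : ((u : K)⁻¹ : K) ∉ locSubring H (P i) (hP i) := by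
          rintro ⟨r, hr, s, hsP, e⟩
          apply hsP
          have hsK : (s : K) = (u : K) * r := by
            calc (s : K) = (u : K) * ((u : K)⁻¹ * s) := by
                  rw [← mul_assoc, mul_inv_cancel₀ hu0, one_mul]
            _ = (u : K) * r := by rw [e]
          have hs' : s = u * (⟨r, hr⟩ : H) := Subtype.ext hsK
          rw [hs']
          exact Ideal.mul_mem_right _ _ hu1
        obtain ⟨m, hm⟩ := exists_pow_mul_mem (hdvr i)
          (frac_of_le hquot (le_trans hDH (le_locSubring (hP i)))) huV huinv x
        refine ⟨u ^ m, fun hh => hu2 (hQ.mem_of_pow_mem m hh), ?_⟩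
        push_cast
        exact hm
    choose w hwQ hwV using hw
    set S : H := s0 * ∏ i, w i with hS
    have hSQ : S ∉ Q := by
      intro hm
      rcases hQ.mem_or_mem hm with hm | hm
      · exact hs0 hm
      · exact prod_not_mem hQ _ _ (fun i _ => hwQ i) hm
    have hxS : x * (S : K) ∈ (H : Set K) := by
      rw [hrep]
      refine ⟨Set.mem_iInter.2 fun i => ?_, ?_⟩
      · have hsplit : S = w i * (s0 * ∏ k ∈ Finset.univ.erase i, w k) := by
          rw [hS, ← Finset.mul_prod_erase Finset.univ w (Finset.mem_univ i)]; ring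
        have heq : x * (S : K)
            = (x * (w i : K)) * (((s0 * ∏ k ∈ Finset.univ.erase i, w k : H)) : K) := by
          rw [hsplit]; push_cast; ring
        show x * (S : K) ∈ locSet H (P i) H
        have hmem : x * (S : K) ∈ locSubring H (P i) (hP i) := by
          rw [heq]
          exact mul_mem (hwV i)
            (le_locSubring (hP i) (s0 * ∏ k ∈ Finset.univ.erase i, w k).2)
        exact hmem
      · have heq : x * (S : K) = (x * (s0 : K)) * (((∏ i, w i : H)) : K) := by
          rw [hS]; push_cast; ring
        show x * (S : K) ∈ (R : Set K)
        rw [heq, e0]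
        exact mul_mem hr0 (hHR (∏ i, w i).2)
    exact ⟨x * (S : K), hxS, S, hSQ, rfl⟩

lemma valuationRing_top : ValuationRing (⊤ : Subring K) := by
  have hpre : PreValuationRing ↥(⊤ : Subring K) := by
    constructor
    intro a b
    by_cases ha : (a : K) = 0
    · exact ⟨0, Or.inr (Subtype.ext (by push_cast; simp [ha]))⟩
    · exact ⟨⟨(a : K)⁻¹ * b, trivial⟩, Or.inl (Subtype.ext (by
        push_cast
        rw [← mul_assoc, mul_inv_cancel₀ ha, one_mul]))⟩
  exact { toPreValuationRing := hpre }

lemma valuationRing_of_dvr {V : Subring K} (hd : IsDiscreteValuationRing V) :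
    ValuationRing V := by
  haveI := hd
  infer_instance

/-- Padding family of valuation overrings used in the sufficiency direction. -/
noncomputable def padV (H : Subring K) {t : ℕ} (P : Fin t → Ideal H)
    (hP : ∀ i, (P i).IsPrime) {m : ℕ} (Q : Ideal H)
    (g : {i : Fin t // P i ≤ Q} → Fin m) (j : Fin m) : Subring K :=
  letI := Classical.dec (∃ i : {i : Fin t // P i ≤ Q}, g i = j)
  if h : ∃ i : {i : Fin t // P i ≤ Q}, g i = j then
    locSubring H (P (Classical.choose h).1) (hP _) else ⊤

lemma padV_pos {H : Subring K} {t : ℕ} {P : Fin t → Ideal H}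
    {hP : ∀ i, (P i).IsPrime} {m : ℕ} {Q : Ideal H}
    {g : {i : Fin t // P i ≤ Q} → Fin m} {j : Fin m}
    (h : ∃ i : {i : Fin t // P i ≤ Q}, g i = j) :
    padV H P hP Q g j = locSubring H (P (Classical.choose h).1) (hP _) := by
  unfold padV
  rw [dif_pos h]

lemma padV_neg {H : Subring K} {t : ℕ} {P : Fin t → Ideal H}
    {hP : ∀ i, (P i).IsPrime} {m : ℕ} {Q : Ideal H}
    {g : {i : Fin t // P i ≤ Q} → Fin m} {j : Fin m}
    (h : ¬ ∃ i : {i : Fin t // P i ≤ Q}, g i = j) :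
    padV H P hP Q g j = ⊤ := by
  unfold padV
  rw [dif_neg h]

lemma suff_prime (hquot : ∀ x : K, ∃ a ∈ D, ∃ b ∈ D, b ≠ 0 ∧ x * b = a)
    (hDH : D ≤ H) (hHR : H ≤ R)
    {t : ℕ} (P : Fin t → Ideal H) (hP : ∀ i, (P i).IsPrime)
    (hrep : (H : Set K) = (⋂ i, locSet H (P i) H) ∩ (R : Set K))
    (hdvr : ∀ i, IsDiscreteValuationRing (locSubring H (P i) (hP i)))
    (Q : Ideal H) (hQ : Q.IsPrime) (m : ℕ)
    (g : {i : Fin t // P i ≤ Q} → Fin m) (hg : Function.Injective g) :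
    ∃ V : Fin m → Subring K,
      (∀ j, H ≤ V j ∧ ValuationRing (V j)) ∧
      locSet H Q H = (⋂ j, ((V j) : Set K)) ∩ locSet H Q R := by
  classical
  refine ⟨padV H P hP Q g, fun j => ?_, ?_⟩
  · by_cases h : ∃ i : {i : Fin t // P i ≤ Q}, g i = j
    · rw [padV_pos h]
      exact ⟨le_locSubring _, valuationRing_of_dvr (hdvr _)⟩
    · rw [padV_neg h]
      exact ⟨le_top, valuationRing_top⟩
  · rw [rep_loc hquot hDH hHR P hP hrep hdvr Q hQ]
    congr 1
    apply Set.Subset.antisymm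
    · intro x hx
      refine Set.mem_iInter.2 fun j => ?_
      by_cases h : ∃ i : {i : Fin t // P i ≤ Q}, g i = j
      · show x ∈ (padV H P hP Q g j : Set K)
        rw [padV_pos h]
        exact Set.mem_iInter.1 hx (Classical.choose h)
      · show x ∈ (padV H P hP Q g j : Set K)
        rw [padV_neg h]
        trivial
    · intro x hx
      refine Set.mem_iInter.2 fun i => ?_
      have hcond : ∃ i' : {i : Fin t // P i ≤ Q}, g i' = g i := ⟨i, rfl⟩
      have hch : Classical.choose hcond = i := hg (Classical.choose_spec hcond)
      have hxm := Set.mem_iInter.1 hx (g i)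
      rw [padV_pos hcond] at hxm
      rw [hch] at hxm
      exact hxm

lemma nec (hquot : ∀ x : K, ∃ a ∈ D, ∃ b ∈ D, b ≠ 0 ∧ x * b = a)
    (hDH : D ≤ H) (hHR : H ≤ R)
    {t : ℕ} (P : Fin t → Ideal H) (hP : ∀ i, (P i).IsPrime)
    (hrep : (H : Set K) = (⋂ i, locSet H (P i) H) ∩ (R : Set K))
    (hdvr : ∀ i, IsDiscreteValuationRing (locSubring H (P i) (hP i)))
    (hirr : ∀ j, ¬ ((⋂ i ∈ ({j}ᶜ : Set (Fin t)), locSet H (P i) H) ∩ (R : Set K)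
        ⊆ locSet H (P j) H))
    {m : ℕ} (Q : Ideal H) (hQ : Q.IsPrime)
    (V : Fin m → Subring K) (hV : ∀ j, H ≤ V j ∧ ValuationRing (V j))
    (heq : locSet H Q H = (⋂ j, ((V j) : Set K)) ∩ locSet H Q R)
    (e : Fin (m + 1) → Fin t) (he : Function.Injective e) (hle : ∀ a, P (e a) ≤ Q) :
    False := by
  classical
  have key : ∀ a : Fin (m + 1), ∃ j : Fin m, (V j : Set K) ⊆ locSet H (P (e a)) H := by
    intro a
    set i := e a with hi
    have hfracV := frac_of_le hquot (le_trans hDH (le_locSubring (hP i)))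
    have h1 : locS H (P i) (locSet H Q H) = locSet H (P i) H :=
      locS_locSet (hP i) hQ (hle a) H
    have h2 : locS H (P i) ((⋂ j, ((V j) : Set K)) ∩ locSet H Q R)
        = (⋂ j, locS H (P i) ((V j) : Set K)) ∩ locS H (P i) (locSet H Q R) := by
      apply locS_iInter_inter (hP i)
      · intro j aa haa s
        exact mul_mem haa ((hV j).1 s.2)
      · rintro aa ⟨r, hr, s', hs', e'⟩ s
        exact ⟨r * (s : K), mul_mem hr (hHR s.2), s', hs', by rw [mul_right_comm, e']⟩
    have h3 : locSet H (P i) H = (⋂ j, locS H (P i) ((V j) : Set K)) ∩ locSet H (P i) R := by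
      have hc := congrArg (locS H (P i)) heq
      rw [h1, h2, locS_locSet (hP i) hQ (hle a) R] at hc
      exact hc
    by_contra hno
    push_neg at hno
    have halluniv : ∀ j, locS H (P i) ((V j) : Set K) = Set.univ := by
      intro j
      have hmulW : ∀ x ∈ locS H (P i) ((V j) : Set K), ∀ y ∈ locS H (P i) ((V j) : Set K),
          x * y ∈ locS H (P i) ((V j) : Set K) := by
        rintro x ⟨r, hr, s, hs, ex⟩ y ⟨r', hr', s', hs', ey⟩
        refine ⟨r * r', mul_mem hr hr', s * s',
          fun hm => ((hP i).mem_or_mem hm).elim hs hs', ?_⟩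
        push_cast
        calc x * y * ((s : K) * s') = (x * s) * (y * s') := by ring
        _ = r * r' := by rw [ex, ey]
      have hsub : (locSubring H (P i) (hP i) : Set K) ⊆ locS H (P i) ((V j) : Set K) := by
        rintro x ⟨r, hr, s, hs, ex⟩
        exact ⟨r, (hV j).1 hr, s, hs, ex⟩
      rcases subring_between_dvr (locSubring H (P i) (hP i)) (hdvr i) hfracV _ hmulW hsub
        with h | h
      · exfalso
        apply hno j
        calc (V j : Set K) ⊆ locS H (P i) ((V j) : Set K) := subset_locS (hP i) _
        _ = locSet H (P i) H := h
      · exact h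
    have hRloc : locSet H (P i) H = locSet H (P i) R := by
      rw [h3]
      simp [halluniv]
    obtain ⟨x, hx1, hx2⟩ := Set.not_subset.1 (hirr i)
    apply hx2
    rw [hRloc]
    exact ⟨x, hx1.2, 1, one_not_mem_of_prime (hP i), by simp⟩
  choose jj hjj using key
  obtain ⟨a, b, hab, hjab⟩ := Fintype.exists_ne_map_eq_of_card_lt jj
    (by simp [Fintype.card_fin])
  have hfracW := frac_of_le hquot (le_trans hDH (hV (jj a)).1)
  have hW1 : V (jj a) ≤ locSubring H (P (e a)) (hP (e a)) := fun x hx => hjj a hx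
  have hW2 : V (jj a) ≤ locSubring H (P (e b)) (hP (e b)) := fun x hx =>
    (hjab ▸ hjj b : (V (jj a) : Set K) ⊆ locSet H (P (e b)) H) hx
  have hAB : locSet H (P (e a)) H = locSet H (P (e b)) H := by
    rcases comparable_of_valuation (V (jj a)) (locSubring H (P (e a)) (hP (e a)))
        (locSubring H (P (e b)) (hP (e b))) (hV (jj a)).2 hfracW hW1 hW2 with h | h
    · rcases subring_between_dvr (locSubring H (P (e a)) (hP (e a))) (hdvr (e a))
        (frac_of_le hquot (le_trans hDH (le_locSubring (hP (e a)))))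
        ((locSubring H (P (e b)) (hP (e b))) : Set K)
        (fun x hx y hy => mul_mem hx hy) h with h' | h'
      · exact h'.symm
      · exact absurd h' (dvr_ne_univ _ (hdvr (e b)))
    · rcases subring_between_dvr (locSubring H (P (e b)) (hP (e b))) (hdvr (e b))
        (frac_of_le hquot (le_trans hDH (le_locSubring (hP (e b)))))
        ((locSubring H (P (e a)) (hP (e a))) : Set K)
        (fun x hx y hy => mul_mem hx hy) h with h' | h'
      · exact h'
      · exact absurd h' (dvr_ne_univ _ (hdvr (e a)))
  exact hab (he (P_injective hirr (prime_eq_of_locSet_eq hAB)))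

lemma isFractionRing_of_frac
    (hfrac : ∀ x : K, ∃ a ∈ H, ∃ b ∈ H, b ≠ 0 ∧ x * b = a) :
    IsFractionRing H K := by
  refine ⟨fun y => ?_, fun z => ?_, fun {x y} h => ?_⟩
  · have hy0 : ((y : H) : K) ≠ 0 := by
      intro h0
      have : (y : H) = 0 := Subtype.ext h0
      exact (mem_nonZeroDivisors_iff_ne_zero.1 y.2) this
    exact isUnit_iff_ne_zero.2 hy0
  · obtain ⟨a, ha, b, hb, hb0, e⟩ := hfrac z
    have hbH : (⟨b, hb⟩ : H) ≠ 0 := fun h => hb0 (by simpa [Subtype.ext_iff] using h)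
    exact ⟨⟨⟨a, ha⟩, ⟨⟨b, hb⟩, mem_nonZeroDivisors_of_ne_zero hbH⟩⟩, e⟩
  · exact ⟨1, by rw [Subtype.ext (h : ((x : K)) = (y : K))]⟩

lemma intClosure_eq (hic : IsIntegrallyClosed H)
    (hfrac : ∀ x : K, ∃ a ∈ H, ∃ b ∈ H, b ≠ 0 ∧ x * b = a) :
    intClosure H = H := by
  haveI := hic
  haveI := isFractionRing_of_frac hfrac
  ext x
  constructor
  · intro hx
    obtain ⟨y, hy⟩ := IsIntegrallyClosed.isIntegral_iff.1 (hx : IsIntegral H x)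
    rw [show (algebraMap H K) y = (y : K) from rfl] at hy
    rw [← hy]; exact y.2
  · exact mem_intClosure_of_mem

lemma essNVal_iff (hic : IsIntegrallyClosed H)
    (hfrac : ∀ x : K, ∃ a ∈ H, ∃ b ∈ H, b ≠ 0 ∧ x * b = a) (R : Subring K) (n : ℕ) :
    EssNVal H R n ↔ ∀ Q : Ideal H, Q.IsPrime →
      ∃ V : Fin n → Subring K,
        (∀ i, H ≤ V i ∧ ValuationRing (V i)) ∧
        locSet H Q H = (⋂ i, ((V i) : Set K)) ∩ locSet H Q R := by
  unfold EssNVal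
  rw [intClosure_eq hic hfrac]

end Main

/-- Let `D ⊆ H ⊆ R` be domains (subrings of the quotient field `K` of `D`) with
`R` a proper overring of `D` and `H` integrally closed.  Suppose `H = H_{P 1} ∩ ⋯ ∩ H_{P t} ∩ R`
with `t > 0`, each `H_{P i}` a DVR irredundant in this representation.  If `t ≤ n` then `H` is
essentially `n`-valuated in `R`; and if `n < t` then (1) `H` is essentially `n`-valuated in `R`
iff any `n+1` distinct ideals among the `P i` sum to `H`, and (2) `H` is essentially
one-valuated in `R` iff the `P i` are pairwise comaximal. -/
theorem statement2 {K : Type*} [Field K] (D H R : Subring K)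
    (hquot : ∀ x : K, ∃ a ∈ D, ∃ b ∈ D, b ≠ 0 ∧ x * b = a)
    (hDH : D ≤ H) (hHR : H ≤ R) (hDR : D ≠ R)
    (hic : IsIntegrallyClosed H)
    (t : ℕ) (ht : 0 < t) (P : Fin t → Ideal H) (hP : ∀ i, (P i).IsPrime)
    (hrep : (H : Set K) = (⋂ i, locSet H (P i) H) ∩ (R : Set K))
    (hdvr : ∀ i, IsDiscreteValuationRing (locSubring H (P i) (hP i)))
    (hirr : ∀ j, ¬ ((⋂ i ∈ ({j}ᶜ : Set (Fin t)), locSet H (P i) H) ∩ (R : Set K)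
        ⊆ locSet H (P j) H))
    (n : ℕ) (hn : 0 < n) :
    (t ≤ n → EssNVal H R n) ∧
    (n < t →
      ((EssNVal H R n ↔
          ∀ e : Fin (n + 1) → Fin t, Function.Injective e → (⨆ j, P (e j)) = ⊤) ∧
       (EssNVal H R 1 ↔ ∀ i j, i ≠ j → P i ⊔ P j = ⊤))) := by
  have hfracH : ∀ x : K, ∃ a ∈ H, ∃ b ∈ H, b ≠ 0 ∧ x * b = a := frac_of_le hquot hDH
  have hEiff := essNVal_iff hic hfracH R
  have hsuffcard : ∀ m : ℕ, (∀ Q : Ideal H, Q.IsPrime →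
      ∃ g : {i : Fin t // P i ≤ Q} → Fin m, Function.Injective g) → EssNVal H R m := by
    intro m hm
    rw [hEiff m]
    intro Q hQ
    obtain ⟨g, hg⟩ := hm Q hQ
    exact suff_prime hquot hDH hHR P hP hrep hdvr Q hQ m g hg
  have hnec : ∀ m : ℕ, EssNVal H R m → ∀ e : Fin (m + 1) → Fin t, Function.Injective e →
      (⨆ j, P (e j)) = ⊤ := by
    intro m hEss e he
    by_contra hne
    obtain ⟨Q, hQmax, hQle⟩ := Ideal.exists_le_maximal _ hne
    have hQ := hQmax.isPrime
    obtain ⟨V, hV, heq⟩ := (hEiff m).1 hEss Q hQ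
    exact nec hquot hDH hHR P hP hrep hdvr hirr Q hQ V hV heq e he
      (fun a => le_trans (le_iSup (fun j => P (e j)) a) hQle)
  have hcard_of : ∀ (mm : ℕ) (Q : Ideal H), Q.IsPrime →
      (∀ e : Fin (mm + 1) → Fin t, Function.Injective e → ¬ (∀ a, P (e a) ≤ Q)) →
      ∃ g : {i : Fin t // P i ≤ Q} → Fin mm, Function.Injective g := by
    intro mm Q _hQ hno
    classical
    haveI : Fintype {i : Fin t // P i ≤ Q} := Fintype.ofFinite _
    have hcard : Fintype.card {i : Fin t // P i ≤ Q} ≤ mm := by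
      by_contra hlt
      push_neg at hlt
      obtain ⟨f⟩ := Function.Embedding.nonempty_of_card_le
        (show Fintype.card (Fin (mm + 1)) ≤ Fintype.card {i : Fin t // P i ≤ Q} by
          simpa using hlt)
      exact hno (fun a => (f a).1) (fun a b hab => f.injective (Subtype.ext hab))
        (fun a => (f a).2)
    obtain ⟨g⟩ := Function.Embedding.nonempty_of_card_le
      (show Fintype.card {i : Fin t // P i ≤ Q} ≤ Fintype.card (Fin mm) by simpa using hcard)
    exact ⟨g, g.injective⟩
  refine ⟨?_, ?_⟩
  · intro htn
    apply hsuffcard n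
    intro Q hQ
    classical
    haveI : Fintype {i : Fin t // P i ≤ Q} := Fintype.ofFinite _
    have h1 : Fintype.card {i : Fin t // P i ≤ Q} ≤ t := by
      have := Fintype.card_le_of_injective
        (Subtype.val : {i : Fin t // P i ≤ Q} → Fin t) Subtype.val_injective
      simpa using this
    obtain ⟨g⟩ := Function.Embedding.nonempty_of_card_le
      (show Fintype.card {i : Fin t // P i ≤ Q} ≤ Fintype.card (Fin n) by
        simpa using le_trans h1 htn)
    exact ⟨g, g.injective⟩
  · intro _hnt
    refine ⟨⟨?_, ?_⟩, ⟨?_, ?_⟩⟩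
    · intro hEss e he
      exact hnec n hEss e he
    · intro hcond
      apply hsuffcard n
      intro Q hQ
      apply hcard_of n Q hQ
      intro e he hleQ
      have hco := hcond e he
      have htop : (⊤ : Ideal H) ≤ Q := by
        rw [← hco]
        exact iSup_le fun j => hleQ j
      exact hQ.ne_top (top_le_iff.1 htop)
    · intro hEss i j hij
      by_contra hne
      have he : Function.Injective (![i, j] : Fin 2 → Fin t) := by
        intro a b hab
        match a, b with
        | 0, 0 => rfl
        | 1, 1 => rfl
        | 0, 1 => exact absurd hab hij
        | 1, 0 => exact absurd hab.symm hij
      have hsup := hnec 1 hEss ![i, j] he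
      apply hne
      rw [eq_top_iff, ← hsup]
      refine iSup_le fun a => ?_
      match a with
      | 0 => exact le_sup_left
      | 1 => exact le_sup_right
    · intro hcom
      apply hsuffcard 1
      intro Q hQ
      apply hcard_of 1 Q hQ
      intro e he hleQ
      have h01 : e 0 ≠ e 1 := fun h => absurd (he h) (by decide)
      have hco := hcom (e 0) (e 1) h01
      have htop : (⊤ : Ideal H) ≤ Q := by
        rw [← hco]
        exact sup_le (hleQ 0) (hleQ 1)
      exact hQ.ne_top (top_le_iff.1 htop)


end ArticleOT
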